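/- Let M be a loopless matroid with ground set E and lattice of flats L, and let L̂ be the set of flats other than ∅ and E. Then the reduced characteristic polynomial satisfies χ̄_M(q) = [rk M]_q − ∑_{F ∈ L̂} χ̄_{M/F}(q). -/

import Mathlib

open Polynomial

namespace MatroidZeta

open scoped Classical

variable {α : Type*}

/-- The `q`-analogue `[n]_q = 1 + q + ⋯ + q^(n-1)` of a natural number `n`, in `ℤ[q]`. -/
noncomputable def qAnalogue (n : ℕ) : Polynomial ℤ := ∑ i ∈ Finset.range n, X ^ i

/-- The rank of a set `X` in a matroid `M`: the largest size of an independent subset of `X`. -/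
noncomputable def rk (M : Matroid α) (X : Set α) : ℕ :=
  sSup {n | ∃ I, M.Indep I ∧ I ⊆ X ∧ I.ncard = n}

/-- Contraction `M / C` of a matroid, defined as the dual of the deletion of `C`
from the dual matroid. -/
noncomputable def contract (M : Matroid α) (C : Set α) : Matroid α :=
  ((M✶.restrict (M✶.E \ C))✶)

/-- A matroid is loopless if no element of the ground set lies in the closure of `∅`. -/
def Loopless (M : Matroid α) : Prop := M.closure ∅ = ∅

/-- The characteristic polynomial `χ_M(q) = ∑_{S ⊆ E} (-1)^{#S} q^(rk M - rk S)`. -/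
noncomputable def charPoly (M : Matroid α) : Polynomial ℤ :=
  ∑ᶠ S ∈ {S : Set α | S ⊆ M.E}, (-1 : ℤ) ^ S.ncard • (X : Polynomial ℤ) ^ (rk M M.E - rk M S)

/-- The reduced characteristic polynomial
`χ̄_M(q) = χ_M(q)/(q-1) = ∑_{S ⊆ E} (-1)^{#S} [rk M - rk S]_q`. -/
noncomputable def redCharPoly (M : Matroid α) : Polynomial ℤ :=
  ∑ᶠ S ∈ {S : Set α | S ⊆ M.E}, (-1 : ℤ) ^ S.ncard • qAnalogue (rk M M.E - rk M S)

/-- `wt_M(w) = max_{B basis of M} ∑_{e ∈ B} w e`. -/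
noncomputable def wt (M : Matroid α) (w : α → ℝ) : ℝ :=
  sSup {x | ∃ B, M.IsBase B ∧ x = ∑ᶠ e ∈ B, w e}

/-- The initial matroid `M_w`: the matroid on the ground set of `M` whose bases are the
bases of `M` of maximal `w`-weight.  (Such a matroid exists and is unique.) -/
noncomputable def initialMatroid (M : Matroid α) (w : α → ℝ) : Matroid α :=
  if h : ∃ N : Matroid α, N.E = M.E ∧
      ∀ B, N.IsBase B ↔ M.IsBase B ∧ ∑ᶠ e ∈ B, w e = wt M w
  then h.choose else M

/-- A flag of non-minimal flats of `M`: a chain of flats strictly above `cl(∅)`. -/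
def IsFlag (M : Matroid α) (C : Finset (Set α)) : Prop :=
  (∀ F ∈ C, M.IsFlat F ∧ M.closure ∅ ⊂ F) ∧ IsChain (· ⊆ ·) (C : Set (Set α))

/-- `N(M)`: the set of flags of non-minimal flats of `M`. -/
def flags (M : Matroid α) : Set (Finset (Set α)) := {C | IsFlag M C}

/-- `N°(M)`: flags not containing the ground set. -/
def flagsCirc (M : Matroid α) : Set (Finset (Set α)) := {C | IsFlag M C ∧ M.E ∉ C}

/-- `N*(M)`: flags containing the ground set. -/
def flagsStar (M : Matroid α) : Set (Finset (Set α)) := {C | IsFlag M C ∧ M.E ∈ C}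

/-- `z_C(F)`: the largest member of the chain `C` strictly below `F` (or `∅` if none). -/
def zmin (C : Finset (Set α)) (F : Set α) : Set α := ⋃₀ {G | G ∈ C ∧ G ⊂ F}

/-- The weight vector `∑_{F ∈ C} v_F`, a point in the relative interior of the cone `σ_C`. -/
noncomputable def flagWeight (C : Finset (Set α)) : α → ℝ :=
  fun e => ∑ F ∈ C, if e ∈ F then (1 : ℝ) else 0

/-- The initial matroid `M_C` of a flag `C`. -/
noncomputable def flagMatroid (M : Matroid α) (C : Finset (Set α)) : Matroid α :=
  initialMatroid M (flagWeight C)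


open Set Matroid

/-- Finset of all subsets of a (finite) set. -/
noncomputable def psub (X : Set α) : Finset (Set α) :=
  if hX : X.Finite then hX.toFinset.powerset.image ((↑·) : Finset α → Set α) else ∅

lemma mem_psub {X : Set α} (hX : X.Finite) {T : Set α} : T ∈ psub X ↔ T ⊆ X := by
  rw [psub, dif_pos hX]
  simp only [Finset.mem_image, Finset.mem_powerset]
  constructor
  · rintro ⟨t, ht, rfl⟩
    intro x hx
    exact hX.mem_toFinset.1 (ht (by simpa using hx))
  · intro hT
    have hTfin : T.Finite := hX.subset hT
    refine ⟨hTfin.toFinset, ?_, by simp⟩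
    intro x hx
    rw [hX.mem_toFinset]
    exact hT (hTfin.mem_toFinset.1 hx)

lemma sum_psub {β : Type*} [AddCommMonoid β] {X : Set α} (hX : X.Finite) (f : Set α → β) :
    ∑ T ∈ psub X, f T = ∑ t ∈ hX.toFinset.powerset, f ↑t := by
  rw [psub, dif_pos hX]
  exact Finset.sum_image (fun a _ b _ h => by exact_mod_cast h)

lemma sign_sum {X : Set α} (hX : X.Finite) :
    ∑ T ∈ psub X, (-1 : ℤ) ^ T.ncard = if X = ∅ then 1 else 0 := by
  rw [sum_psub hX]
  have : ∀ t ∈ hX.toFinset.powerset, (-1 : ℤ) ^ (t : Set α).ncard = (-1 : ℤ) ^ t.card := by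
    intro t _; rw [Set.ncard_coe_finset]
  rw [Finset.sum_congr rfl this, Finset.sum_powerset_neg_one_pow_card]
  simp [Set.Finite.toFinset_eq_empty]

lemma rk_eq_ncard {M : Matroid α} {I X : Set α} (hX : X.Finite) (hI : M.IsBasis I X) :
    rk M X = I.ncard := by
  apply IsGreatest.csSup_eq
  constructor
  · exact ⟨I, hI.indep, hI.subset, rfl⟩
  · rintro n ⟨I', hI', hI'X, rfl⟩
    obtain ⟨I'', hI'', hsub⟩ := hI'.subset_isBasis_of_subset hI'X hI.subset_ground
    calc I'.ncard ≤ I''.ncard := Set.ncard_le_ncard hsub (hX.subset hI''.subset)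
    _ = I.ncard := by
        have h := hI''.encard_eq_encard hI
        rw [Set.ncard_def, h, ← Set.ncard_def]

lemma rk_empty (M : Matroid α) : rk M ∅ = 0 := by
  have : M.IsBasis ∅ ∅ := M.empty_indep.isBasis_self
  simp [rk_eq_ncard finite_empty this]

lemma flat_closure (M : Matroid α) (X : Set α) : M.IsFlat (M.closure X) := by
  rw [Matroid.closure_def, Set.sInter_eq_iInter]
  have : Nonempty {F // F ∈ {F | M.IsFlat F ∧ X ∩ M.E ⊆ F}} :=
    ⟨⟨M.E, M.ground_isFlat, inter_subset_right⟩⟩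
  exact Matroid.IsFlat.iInter fun F => F.2.1

lemma rk_closure_eq {M : Matroid α} (hE : M.E.Finite) {X : Set α} (hX : X ⊆ M.E) :
    rk M (M.closure X) = rk M X := by
  obtain ⟨I, hI⟩ := M.exists_isBasis X hX
  rw [rk_eq_ncard (hE.subset hX) hI,
    rk_eq_ncard (hE.subset (M.closure_subset_ground X)) hI.isBasis_closure_right]


@[simp] lemma contract_ground (M : Matroid α) (C : Set α) :
    (contract M C).E = M.E \ C := rfl

lemma contract_base_iff {M : Matroid α} {C B : Set α} :
    (contract M C).IsBase B ↔ B ⊆ M.E \ C ∧ M✶.IsBasis ((M.E \ C) \ B) (M.E \ C) := by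
  rw [contract, Matroid.dual_isBase_iff', Matroid.isBase_restrict_iff']
  constructor
  · rintro ⟨h1, h2⟩
    have h2' : B ⊆ M.E \ C := h2
    exact ⟨h2', (Matroid.isBasis'_iff_isBasis (by exact diff_subset)).1 h1⟩
  · rintro ⟨h1, h2⟩
    exact ⟨h2.isBasis', h1⟩

lemma contract_indep_of {M : Matroid α} {C J I : Set α} (hJ : M.IsBasis J C)
    (hI : I ⊆ M.E \ C) (hind : M.Indep (I ∪ J)) : (contract M C).Indep I := by
  have hC : C ⊆ M.E := hJ.subset_ground
  have hIC : Disjoint I C := disjoint_sdiff_left.mono_left hI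
  -- I ∪ J is a basis of C ∪ I
  have hbas : M.IsBasis (I ∪ J) (C ∪ I) := by
    apply hind.isBasis_of_subset_of_subset_closure
    · exact union_subset subset_union_right (hJ.subset.trans subset_union_left)
    · refine union_subset ?_ ?_
      · exact hJ.subset_closure.trans
          (M.closure_subset_closure subset_union_right)
      · exact subset_union_left.trans (M.subset_closure _ hind.subset_ground)
  obtain ⟨B₀, hB₀, hB₀int⟩ := hbas.exists_isBasis_inter_eq_of_superset
    (Y := M.E) (union_subset hC (hI.trans diff_subset))
  have hB₀base : M.IsBase B₀ := Matroid.isBasis_ground_iff.1 hB₀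
  have hB₀C : B₀ ∩ C = J := by
    have h1 : B₀ ∩ C = (B₀ ∩ (C ∪ I)) ∩ C := by
      rw [inter_assoc, union_inter_cancel_left]
    rw [h1, hB₀int, union_inter_distrib_right, hIC.inter_eq, empty_union,
      inter_eq_left.2 hJ.subset]
  have hbasC : M.IsBasis (B₀ ∩ C) C := by rw [hB₀C]; exact hJ
  have hIB₀ : I ⊆ B₀ \ C := by
    refine subset_diff.2 ⟨?_, hIC⟩
    intro x hx
    have : x ∈ B₀ ∩ (C ∪ I) := by rw [hB₀int]; exact Or.inl hx
    exact this.1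
  refine Matroid.indep_iff.2 ⟨B₀ \ C, ?_, hIB₀⟩
  rw [contract_base_iff]
  refine ⟨diff_subset_diff_left hB₀base.subset_ground, ?_⟩
  have hd := hB₀base.compl_inter_isBasis_of_inter_isBasis hbasC
  have hset : (M.E \ B₀) ∩ (M.E \ C) = (M.E \ C) \ (B₀ \ C) := by
    ext x; simp only [mem_inter_iff, mem_diff]; tauto
  rwa [hset] at hd


lemma exists_of_contract_indep {M : Matroid α} {C I : Set α} (hC : C ⊆ M.E)
    (h : (contract M C).Indep I) :
    I ⊆ M.E \ C ∧ ∃ J, M.IsBasis J C ∧ M.Indep (I ∪ J) := by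
  obtain ⟨B, hB, hIB⟩ := (Matroid.indep_iff).1 h
  rw [contract_base_iff] at hB
  obtain ⟨hBsub, hBd⟩ := hB
  obtain ⟨Bs, hBs, hBsint⟩ := hBd.exists_isBasis_inter_eq_of_superset
    (Y := M✶.E) diff_subset
  have hBsBase : M✶.IsBase Bs := Matroid.isBasis_ground_iff.1 hBs
  set B₀ := M.E \ Bs with hB₀def
  have hB₀ : M.IsBase B₀ := hBsBase.compl_isBase_of_dual
  have hBsE : Bs ⊆ M.E := hBsBase.subset_ground
  have hEB₀ : M.E \ B₀ = Bs := diff_diff_cancel_left hBsE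
  have hbasC : M.IsBasis (B₀ ∩ C) C := by
    rw [hB₀.inter_isBasis_iff_compl_inter_isBasis_dual hC, hEB₀]
    rw [hBsint]
    exact hBd
  have hIB₀ : I ⊆ B₀ := by
    intro x hx
    have hxB := hIB hx
    have hxEC : x ∈ M.E \ C := hBsub hxB
    refine ⟨hxEC.1, fun hxBs => ?_⟩
    have : x ∈ Bs ∩ (M.E \ C) := ⟨hxBs, hxEC⟩
    rw [hBsint] at this
    exact this.2 hxB
  exact ⟨hIB.trans hBsub, B₀ ∩ C, hbasC,
    hB₀.indep.subset (union_subset hIB₀ inter_subset_left)⟩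

lemma rk_contract_add {M : Matroid α} (hE : M.E.Finite) {C T : Set α} (hC : C ⊆ M.E)
    (hT : T ⊆ M.E \ C) : rk (contract M C) T + rk M C = rk M (C ∪ T) := by
  set N := contract M C with hN
  obtain ⟨I, hI⟩ := N.exists_isBasis T (by rw [hN, contract_ground]; exact hT)
  obtain ⟨hIE, J, hJ, hIJ⟩ := exists_of_contract_indep hC hI.indep
  have hTE : T ⊆ M.E := hT.trans diff_subset
  have hIfin : I.Finite := hE.subset (hI.subset.trans hTE)
  have hJfin : J.Finite := hE.subset hJ.left_subset_ground
  have rkNT : rk N T = I.ncard := rk_eq_ncard (hE.subset hTE) hI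
  have rkC : rk M C = J.ncard := rk_eq_ncard (hE.subset hC) hJ
  have hdisj : Disjoint I J := (disjoint_sdiff_left.mono_left hIE).mono_right hJ.subset
  have hbas : M.IsBasis (I ∪ J) (C ∪ T) := by
    refine hIJ.isBasis_of_subset_of_subset_closure
      (union_subset (hI.subset.trans subset_union_right)
        (hJ.subset.trans subset_union_left)) (union_subset ?_ ?_)
    · exact hJ.subset_closure.trans (M.closure_subset_closure subset_union_right)
    · intro t ht
      by_contra htc
      have htE : t ∈ M.E := hTE ht
      have htI : t ∉ I := fun hmem =>
        htc (M.subset_closure _ hIJ.subset_ground (Or.inl hmem))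
      have hins : M.Indep (insert t (I ∪ J)) := by
        rw [hIJ.insert_indep_iff]
        exact Or.inl ⟨htE, htc⟩
      have hNins : N.Indep (insert t I) := by
        refine contract_indep_of hJ (insert_subset (hT ht) hIE) ?_
        rwa [Set.insert_union]
      exact htI (hI.mem_of_insert_indep ht hNins)
  have h2 : rk M (C ∪ T) = (I ∪ J).ncard :=
    rk_eq_ncard (hE.subset (union_subset hC hTE)) hbas
  rw [rkNT, rkC, h2, Set.ncard_union_eq hdisj hIfin hJfin]


noncomputable def flatsFinset (M : Matroid α) : Finset (Set α) :=
  (psub M.E).filter M.IsFlat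

lemma mem_flatsFinset {M : Matroid α} (hE : M.E.Finite) {F : Set α} :
    F ∈ flatsFinset M ↔ M.IsFlat F := by
  rw [flatsFinset, Finset.mem_filter, mem_psub hE]
  exact ⟨fun h => h.2, fun h => ⟨h.subset_ground, h⟩⟩

lemma empty_flat {M : Matroid α} (hM : Loopless M) : M.IsFlat ∅ := by
  have := flat_closure M ∅
  rwa [hM] at this

noncomputable def cFG (M : Matroid α) (F G : Set α) : ℤ :=
  ∑ T ∈ (psub (M.E \ F)).filter (fun T => M.closure (F ∪ T) = G), (-1:ℤ)^T.ncard

lemma cFG_eq_zero {M : Matroid α} (hE : M.E.Finite) {F G : Set α} (hFE : F ⊆ M.E)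
    (h : ¬ F ⊆ G) : cFG M F G = 0 := by
  rw [cFG, Finset.filter_eq_empty_iff.2, Finset.sum_empty]
  intro T hT hclo
  refine h ?_
  calc F ⊆ F ∪ T := subset_union_left
  _ ⊆ M.closure (F ∪ T) := M.subset_closure _
      (union_subset hFE (((mem_psub (hE.subset diff_subset)).1 hT).trans diff_subset))
  _ = G := hclo

lemma filter_psub_eq {M : Matroid α} (hE : M.E.Finite) {F G H : Set α} (hGH : G ⊆ H)
    (hHE : H ⊆ M.E) :
    (psub (H \ F)).filter (fun T => M.closure (F ∪ T) = G) =
      (psub (M.E \ F)).filter (fun T => M.closure (F ∪ T) = G) := by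
  have hHfin : (H \ F).Finite := hE.subset (diff_subset.trans hHE)
  have hEfin : (M.E \ F).Finite := hE.subset diff_subset
  ext T
  simp only [Finset.mem_filter, mem_psub hHfin, mem_psub hEfin]
  constructor
  · rintro ⟨h1, h2⟩
    exact ⟨h1.trans (diff_subset_diff_left hHE), h2⟩
  · rintro ⟨h1, h2⟩
    refine ⟨fun x hx => ⟨?_, (h1 hx).2⟩, h2⟩
    have hxG : x ∈ G := by
      rw [← h2]
      exact M.inter_ground_subset_closure (F ∪ T) ⟨Or.inr hx, (h1 hx).1⟩
    exact hGH hxG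

lemma star_sum {M : Matroid α} (hE : M.E.Finite) (hM : Loopless M) {H : Set α}
    (hH : M.IsFlat H) :
    ∑ G ∈ (flatsFinset M).filter (· ⊆ H), ∑ F ∈ flatsFinset M, cFG M F G = 1 := by
  have hHE : H ⊆ M.E := hH.subset_ground
  have hHFfin : ∀ F : Set α, (H \ F).Finite := fun F => hE.subset (diff_subset.trans hHE)
  have key : ∀ F ∈ (flatsFinset M).filter (· ⊆ H),
      ∑ G ∈ (flatsFinset M).filter (· ⊆ H), cFG M F G
      = ∑ T ∈ psub (H \ F), (-1:ℤ)^T.ncard := by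
    intro F hF
    obtain ⟨hFmem, hFH⟩ := Finset.mem_filter.1 hF
    have congrG : ∀ G ∈ (flatsFinset M).filter (· ⊆ H), cFG M F G
        = ∑ T ∈ (psub (H \ F)).filter (fun T => M.closure (F ∪ T) = G),
            (-1:ℤ)^T.ncard := by
      intro G hG
      rw [cFG, filter_psub_eq hE (Finset.mem_filter.1 hG).2 hHE]
    rw [Finset.sum_congr rfl congrG]
    refine Finset.sum_fiberwise_of_maps_to ?_ (fun T : Set α => (-1:ℤ)^T.ncard)
    intro T hT
    have hTsub : T ⊆ H \ F := (mem_psub (hHFfin F)).1 hT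
    rw [Finset.mem_filter, mem_flatsFinset hE]
    refine ⟨flat_closure M _, ?_⟩
    calc M.closure (F ∪ T) ⊆ M.closure H :=
          M.closure_subset_closure (union_subset hFH (hTsub.trans diff_subset))
    _ = H := hH.closure
  have ext1 : ∀ G ∈ (flatsFinset M).filter (· ⊆ H),
      ∑ F ∈ flatsFinset M, cFG M F G = ∑ F ∈ (flatsFinset M).filter (· ⊆ H), cFG M F G := by
    intro G hG
    refine (Finset.sum_subset (Finset.filter_subset _ _) ?_).symm
    intro F hF hFnot
    have hFflat := (mem_flatsFinset hE).1 hF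
    have hFH : ¬ F ⊆ H := by
      intro h
      exact hFnot (Finset.mem_filter.2 ⟨hF, h⟩)
    exact cFG_eq_zero hE hFflat.subset_ground
      (fun h => hFH (h.trans (Finset.mem_filter.1 hG).2))
  rw [Finset.sum_congr rfl ext1, Finset.sum_comm, Finset.sum_congr rfl key]
  have congr2 : ∀ F ∈ (flatsFinset M).filter (· ⊆ H),
      ∑ T ∈ psub (H \ F), (-1:ℤ)^T.ncard = if F = H then 1 else 0 := by
    intro F hF
    obtain ⟨hFmem, hFH⟩ := Finset.mem_filter.1 hF
    rw [sign_sum (hHFfin F)]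
    by_cases h : F = H
    · rw [if_pos (by rw [h, diff_self] : H \ F = ∅), if_pos h]
    · rw [if_neg (fun hs => h (subset_antisymm hFH (diff_eq_empty.1 hs))), if_neg h]
  have hHmem : H ∈ (flatsFinset M).filter (· ⊆ H) :=
    Finset.mem_filter.2 ⟨(mem_flatsFinset hE).2 hH, Subset.rfl⟩
  rw [Finset.sum_congr rfl congr2, Finset.sum_ite_eq' _ H (fun _ => (1:ℤ)), if_pos hHmem]


lemma d_empty {M : Matroid α} (hE : M.E.Finite) (hM : Loopless M) :
    ∑ F ∈ flatsFinset M, cFG M F ∅ = 1 := by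
  have hstar := star_sum hE hM (empty_flat hM)
  have hfe : (flatsFinset M).filter (· ⊆ (∅ : Set α)) = {∅} := by
    ext F
    simp only [Finset.mem_filter, Finset.mem_singleton, subset_empty_iff]
    constructor
    · exact fun h => h.2
    · rintro rfl
      exact ⟨(mem_flatsFinset hE).2 (empty_flat hM), rfl⟩
  rwa [hfe, Finset.sum_singleton] at hstar

lemma dG_eq {M : Matroid α} (hE : M.E.Finite) (hM : Loopless M) :
    ∀ n : ℕ, ∀ G ∈ flatsFinset M, G.ncard ≤ n →
      ∑ F ∈ flatsFinset M, cFG M F G = if G = ∅ then 1 else 0 := by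
  intro n
  induction n with
  | zero =>
    intro G hG hn
    have hGfin : G.Finite := hE.subset ((mem_flatsFinset hE).1 hG).subset_ground
    have hG0 : G = ∅ := by
      rw [← Set.ncard_eq_zero hGfin]; omega
    rw [hG0, if_pos rfl]
    exact d_empty hE hM
  | succ n ih =>
    intro G hG hn
    by_cases hG0 : G = ∅
    · rw [hG0, if_pos rfl]
      exact d_empty hE hM
    · have hGflat := (mem_flatsFinset hE).1 hG
      have hGfin : G.Finite := hE.subset hGflat.subset_ground
      have hstar := star_sum hE hM hGflat
      have hGmem : G ∈ (flatsFinset M).filter (· ⊆ G) :=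
        Finset.mem_filter.2 ⟨hG, Subset.rfl⟩
      rw [← Finset.add_sum_erase _ _ hGmem] at hstar
      have herase : ∀ G' ∈ ((flatsFinset M).filter (· ⊆ G)).erase G,
          (∑ F ∈ flatsFinset M, cFG M F G') = if G' = ∅ then 1 else 0 := by
        intro G' hG'
        have h1 := Finset.mem_of_mem_erase hG'
        have hne := Finset.ne_of_mem_erase hG'
        have hss : G' ⊂ G := ssubset_of_subset_of_ne (Finset.mem_filter.1 h1).2 hne
        refine ih G' (Finset.mem_filter.1 h1).1 ?_
        have := Set.ncard_lt_ncard hss hGfin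
        omega
      rw [Finset.sum_congr rfl herase, Finset.sum_ite_eq' _ (∅ : Set α)
        (fun _ => (1:ℤ))] at hstar
      have hmem0 : (∅ : Set α) ∈ ((flatsFinset M).filter (· ⊆ G)).erase G :=
        Finset.mem_erase.2 ⟨fun h => hG0 h.symm,
          Finset.mem_filter.2 ⟨(mem_flatsFinset hE).2 (empty_flat hM), empty_subset G⟩⟩
      rw [if_pos hmem0] at hstar
      rw [if_neg hG0]
      omega

noncomputable def AF (M : Matroid α) (F : Set α) : Polynomial ℤ :=
  ∑ T ∈ psub (M.E \ F), (-1:ℤ)^T.ncard • qAnalogue (rk M M.E - rk M (F ∪ T))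

lemma sum_AF {M : Matroid α} (hE : M.E.Finite) (hM : Loopless M) :
    ∑ F ∈ flatsFinset M, AF M F = qAnalogue (rk M M.E) := by
  have step1 : ∀ F ∈ flatsFinset M, AF M F =
      ∑ G ∈ flatsFinset M, cFG M F G • qAnalogue (rk M M.E - rk M G) := by
    intro F hF
    have hFE := ((mem_flatsFinset hE).1 hF).subset_ground
    have hfin : (M.E \ F).Finite := hE.subset diff_subset
    have e1 : AF M F = ∑ T ∈ psub (M.E \ F),
        (-1:ℤ)^T.ncard • qAnalogue (rk M M.E - rk M (M.closure (F ∪ T))) := by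
      rw [AF]
      refine Finset.sum_congr rfl fun T hT => ?_
      rw [rk_closure_eq hE (union_subset hFE (((mem_psub hfin).1 hT).trans diff_subset))]
    rw [e1, ← Finset.sum_fiberwise_of_maps_to (g := fun T => M.closure (F ∪ T))
        (t := flatsFinset M) (fun T _ => (mem_flatsFinset hE).2 (flat_closure M _))
        (fun T => (-1:ℤ)^T.ncard • qAnalogue (rk M M.E - rk M (M.closure (F ∪ T))))]
    refine Finset.sum_congr rfl fun G hG => ?_
    rw [cFG, Finset.sum_smul]
    refine Finset.sum_congr rfl fun T hT => ?_
    rw [(Finset.mem_filter.1 hT).2]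
  rw [Finset.sum_congr rfl step1, Finset.sum_comm]
  have step2 : ∀ G ∈ flatsFinset M,
      ∑ F ∈ flatsFinset M, cFG M F G • qAnalogue (rk M M.E - rk M G)
      = if G = ∅ then qAnalogue (rk M M.E - rk M G) else 0 := by
    intro G hG
    rw [← Finset.sum_smul, dG_eq hE hM G.ncard G hG le_rfl, ite_smul, one_smul, zero_smul]
  rw [Finset.sum_congr rfl step2,
    Finset.sum_ite_eq' _ (∅ : Set α) (fun G => qAnalogue (rk M M.E - rk M G)),
    if_pos ((mem_flatsFinset hE).2 (empty_flat hM)), rk_empty, Nat.sub_zero]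


lemma qAnalogue_zero : qAnalogue 0 = 0 := by simp [qAnalogue]

lemma psub_empty : psub (∅ : Set α) = {∅} := by
  ext T
  rw [mem_psub finite_empty, subset_empty_iff, Finset.mem_singleton]

lemma redCharPoly_eq_sum (M : Matroid α) (hE : M.E.Finite) :
    redCharPoly M = ∑ T ∈ psub M.E, (-1:ℤ)^T.ncard • qAnalogue (rk M M.E - rk M T) := by
  have hfin : {S : Set α | S ⊆ M.E}.Finite := hE.finite_subsets
  rw [redCharPoly, finsum_mem_eq_finite_toFinset_sum _ hfin]
  refine Finset.sum_congr ?_ fun _ _ => rfl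
  ext T
  rw [Set.Finite.mem_toFinset, mem_psub hE, Set.mem_setOf_eq]

lemma AF_contract {M : Matroid α} (hE : M.E.Finite) {F : Set α} (hF : M.IsFlat F) :
    redCharPoly (contract M F) = AF M F := by
  have hFE : F ⊆ M.E := hF.subset_ground
  have hNE : (contract M F).E.Finite := by
    rw [contract_ground]; exact hE.subset diff_subset
  rw [redCharPoly_eq_sum _ hNE, AF]
  have hgr : (contract M F).E = M.E \ F := contract_ground M F
  rw [hgr]
  refine Finset.sum_congr rfl fun T hT => ?_
  have hTsub : T ⊆ M.E \ F := (mem_psub (hE.subset diff_subset)).1 hT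
  have h1 := rk_contract_add (C := F) (T := M.E \ F) hE hFE Subset.rfl
  have h2 := rk_contract_add (C := F) (T := T) hE hFE hTsub
  rw [union_diff_cancel hFE] at h1
  have : rk (contract M F) (M.E \ F) - rk (contract M F) T
      = rk M M.E - rk M (F ∪ T) := by omega
  rw [this]

lemma AF_empty {M : Matroid α} (hE : M.E.Finite) : AF M ∅ = redCharPoly M := by
  rw [AF, redCharPoly_eq_sum M hE]
  simp only [diff_empty, empty_union]

lemma AF_ground (M : Matroid α) : AF M M.E = 0 := by
  rw [AF, diff_self, psub_empty, Finset.sum_singleton, union_empty, Nat.sub_self,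
    qAnalogue_zero, smul_zero]

theorem redCharPoly_eq_qAnalogue_sub_sum (M : Matroid α) (hE : M.E.Finite)
    (hM : Loopless M) :
    redCharPoly M = qAnalogue (rk M M.E) -
      ∑ᶠ F ∈ {F : Set α | M.IsFlat F ∧ F ≠ ∅ ∧ F ≠ M.E},
        redCharPoly (contract M F) := by
  have hsetfin : {F : Set α | M.IsFlat F ∧ F ≠ ∅ ∧ F ≠ M.E}.Finite :=
    hE.finite_subsets.subset (fun F hF => hF.1.subset_ground)
  rw [finsum_mem_eq_finite_toFinset_sum _ hsetfin]
  have htf : hsetfin.toFinset = (flatsFinset M).filter (fun F => F ≠ ∅ ∧ F ≠ M.E) := by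
    ext F
    rw [Set.Finite.mem_toFinset, Finset.mem_filter, mem_flatsFinset hE, Set.mem_setOf_eq]
  rw [htf]
  have hmid : ∀ F ∈ (flatsFinset M).filter (fun F => F ≠ ∅ ∧ F ≠ M.E),
      redCharPoly (contract M F) = AF M F := fun F hF =>
    AF_contract hE ((mem_flatsFinset hE).1 (Finset.mem_filter.1 hF).1)
  rw [Finset.sum_congr rfl hmid]
  by_cases hE0 : M.E = ∅
  · have hmid0 : (flatsFinset M).filter (fun F => F ≠ ∅ ∧ F ≠ M.E) = ∅ := by
      refine Finset.eq_empty_of_forall_notMem fun F hF => ?_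
      obtain ⟨h1, h2, _⟩ := Finset.mem_filter.1 hF
      have : F ⊆ M.E := ((mem_flatsFinset hE).1 h1).subset_ground
      rw [hE0, subset_empty_iff] at this
      exact h2 this
    rw [hmid0, Finset.sum_empty, redCharPoly_eq_sum M hE, hE0, psub_empty,
      Finset.sum_singleton, Nat.sub_self, qAnalogue_zero, smul_zero, rk_empty]
    rw [qAnalogue_zero, sub_zero]
  · have hsum := sum_AF hE hM
    have hsplit : flatsFinset M = insert ∅ (insert M.E
        ((flatsFinset M).filter (fun F => F ≠ ∅ ∧ F ≠ M.E))) := by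
      ext F
      simp only [Finset.mem_insert, Finset.mem_filter, mem_flatsFinset hE]
      constructor
      · intro hF
        by_cases h1 : F = ∅
        · exact Or.inl h1
        by_cases h2 : F = M.E
        · exact Or.inr (Or.inl h2)
        · exact Or.inr (Or.inr ⟨hF, h1, h2⟩)
      · rintro (rfl | rfl | ⟨h, _, _⟩)
        · exact empty_flat hM
        · exact M.ground_isFlat
        · exact h
    have hnot1 : (∅ : Set α) ∉ insert M.E
        ((flatsFinset M).filter (fun F => F ≠ ∅ ∧ F ≠ M.E)) := by
      intro hmem
      rcases Finset.mem_insert.1 hmem with h | h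
      · exact hE0 h.symm
      · exact (Finset.mem_filter.1 h).2.1 rfl
    have hnot2 : M.E ∉ (flatsFinset M).filter (fun F => F ≠ ∅ ∧ F ≠ M.E) := by
      simp only [Finset.mem_filter]
      rintro ⟨-, -, h⟩
      exact h rfl
    rw [hsplit, Finset.sum_insert hnot1, Finset.sum_insert hnot2, AF_empty hE,
      AF_ground] at hsum
    rw [zero_add] at hsum
    exact eq_sub_of_add_eq hsum

end MatroidZeta
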